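/- In BCP with one slot of rate θ1 = 1, two players with values (10, 5) and budgets (5, 3) budget-bidding truthfully, the bid profile (b1, b2) = (5, 4) realizes an envy-free outcome (player 1 gets the slot at price 4), but is not a Nash equilibrium: player 1 strictly improves by deviating to bid 3.5, since then player 2's bid of 4 is highest but player 2 cannot afford the slot at price 3.5, so player 1 gets the slot at price 0. -/

import Mathlib

/-- The bid (or other attribute) of the player occupying rank `r` in the ordering `π`
(rank `0` is the highest bidder); `0` for out-of-range ranks. -/
noncomputable def rankVal {n : ℕ} (f : Fin n → ℝ) (π : Equiv.Perm (Fin n)) (r : ℕ) : ℝ :=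
  if h : r < n then f (π ⟨r, h⟩) else 0

/-- `π` lists the players in decreasing order of their bids `b`,
breaking ties according to the fixed priority order `prio` (lower `prio` = higher priority). -/
def IsBidOrder {n : ℕ} (b : Fin n → ℝ) (prio : Fin n → ℕ) (π : Equiv.Perm (Fin n)) : Prop :=
  ∀ r r' : Fin n, r < r' →
    b (π r) > b (π r') ∨ (b (π r) = b (π r') ∧ prio (π r) < prio (π r'))

/-- BCP: set of slots still unassigned before the player of rank `r` is processed.
The player of rank `r` pays the next lower bid `rb (r+1)` per click and takes the highest
(affordable w.r.t. his budget-bid `rg r`) free slot. Slots are indexed by decreasing CTR. -/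
noncomputable def bcpAvail {k : ℕ} (θ : Fin k → ℝ) (rb rg : ℕ → ℝ) : ℕ → Finset (Fin k)
  | 0 => Finset.univ
  | r + 1 =>
    let F := (bcpAvail θ rb rg r).filter fun s => θ s * rb (r + 1) ≤ rg r
    if h : F.Nonempty then (bcpAvail θ rb rg r).erase (F.min' h) else bcpAvail θ rb rg r

/-- BCP: the slot assigned to the player of rank `r` (or `none`). -/
noncomputable def bcpSlot {k : ℕ} (θ : Fin k → ℝ) (rb rg : ℕ → ℝ) (r : ℕ) : Option (Fin k) :=
  let F := (bcpAvail θ rb rg r).filter fun s => θ s * rb (r + 1) ≤ rg r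
  if h : F.Nonempty then some (F.min' h) else none

/-- Utility (in `EReal`, so that budget violation can be `⊥ = -∞`) of player `i` under BCP
with value-bids `b`, budget-bids `g`, bid order `π`, true values `v` and true budgets `B`. -/
noncomputable def bcpUtil {n k : ℕ} (θ : Fin k → ℝ) (v B b g : Fin n → ℝ)
    (π : Equiv.Perm (Fin n)) (i : Fin n) : EReal :=
  let r := (π.symm i : ℕ)
  let p := rankVal b π (r + 1)
  match bcpSlot θ (rankVal b π) (rankVal g π) r with
  | none => 0
  | some s => if θ s * p ≤ B i then ((θ s * (v i - p) : ℝ) : EReal) else ⊥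

/-- BCP with one slot (`θ1 = 1`), two players with values `(10, 5)`, budgets `(5, 3)` and
true budget-bids: the bid profile `(5, 4)` (bid order = identity) gives player 1 the slot at
price `4`, which is an envy-free outcome (player 1 is within budget with nonnegative
utility, and player 2 cannot afford the slot at price `4`), yet it is not a Nash
equilibrium: deviating to bid `3.5` (so that player 2 bids highest but cannot afford the
slot at price `3.5`, and player 1 then gets the slot at price `0`) strictly improves
player 1's utility. -/
theorem bcp_envy_free_not_nash :
    IsBidOrder ![(5 : ℝ), 4] (fun i => (i : ℕ)) 1 ∧
    bcpSlot ![(1 : ℝ)] (rankVal ![(5 : ℝ), 4] 1) (rankVal ![(5 : ℝ), 3] 1) 0 = some 0 ∧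
    rankVal ![(5 : ℝ), 4] 1 1 = 4 ∧
    -- envy-freeness of this outcome:
    (![(1 : ℝ)]) 0 * 4 ≤ (![(5 : ℝ), 3]) 0 ∧
    0 ≤ (![(1 : ℝ)]) 0 * ((![(10 : ℝ), 5]) 0 - 4) ∧
    ((![(1 : ℝ)]) 0 * 4 ≤ (![(5 : ℝ), 3]) 1 → (0 : ℝ) ≥ (![(1 : ℝ)]) 0 * ((![(10 : ℝ), 5]) 1 - 4)) ∧
    -- the deviation of player 1 to bid 3.5 and its outcome:
    IsBidOrder (Function.update ![(5 : ℝ), 4] 0 3.5) (fun i => (i : ℕ)) (Equiv.swap 0 1) ∧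
    bcpSlot ![(1 : ℝ)] (rankVal (Function.update ![(5 : ℝ), 4] 0 3.5) (Equiv.swap 0 1))
        (rankVal ![(5 : ℝ), 3] (Equiv.swap 0 1)) 0 = none ∧
    bcpSlot ![(1 : ℝ)] (rankVal (Function.update ![(5 : ℝ), 4] 0 3.5) (Equiv.swap 0 1))
        (rankVal ![(5 : ℝ), 3] (Equiv.swap 0 1)) 1 = some 0 ∧
    -- strict improvement for player 1, so the original profile is not a Nash equilibrium:
    bcpUtil ![(1 : ℝ)] ![(10 : ℝ), 5] ![(5 : ℝ), 3] ![(5 : ℝ), 4] ![(5 : ℝ), 3] 1 0 <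
      bcpUtil ![(1 : ℝ)] ![(10 : ℝ), 5] ![(5 : ℝ), 3] (Function.update ![(5 : ℝ), 4] 0 3.5)
        ![(5 : ℝ), 3] (Equiv.swap 0 1) 0 := by
  have hswap0 : (Equiv.swap (0:Fin 2) 1) 0 = 1 := by decide
  have hswap1 : (Equiv.swap (0:Fin 2) 1) 1 = 0 := by decide
  refine ⟨?_, ?_, ?_, ?_, ?_, ?_, ?_, ?_, ?_, ?_⟩
  · intro r r' h
    fin_cases r <;> fin_cases r' <;> simp_all <;> norm_num
  · simp [bcpSlot, bcpAvail, rankVal]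
    norm_num
  · simp [rankVal]
  · norm_num
  · norm_num
  · intro h; norm_num at h
  · intro r r' h
    fin_cases r <;> fin_cases r' <;> simp_all [Function.update] <;> norm_num
  · simp [bcpSlot, bcpAvail, rankVal, Function.update]
    norm_num
  · simp [bcpSlot, bcpAvail, rankVal, Function.update]
    norm_num
  · simp [bcpUtil, bcpSlot, bcpAvail, rankVal, Function.update]
    norm_num
    rw [← EReal.coe_sub]
    have h1 : (Equiv.symm (1 : Equiv.Perm (Fin 2))) 0 = 0 := rfl
    simp [h1, bcpAvail]
    norm_num
    rw [← EReal.coe_sub]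
    exact EReal.coe_lt_coe_iff.mpr (by norm_num : (10:ℝ) - 4 < 10)
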